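/- Let A = (E, {M_k}_{k∈O}) be a quantum algorithm on a d-dimensional space and let 0 < η ≤ 1. Suppose there exists a subset S ⊆ O such that λ_min(M_S) = 0 and λ_max(M_S) > 0, where M_S = ∑_{k∈S} E†(M_k). Then for every ε ≥ 0, A is not ε-differentially private within η. -/

import Mathlib

open Matrix BigOperators
open scoped ComplexOrder

namespace QDP

variable {n : Type*} [Fintype n] [DecidableEq n]

/-- The square root of a positive semidefinite matrix, as `Matrix.PosSemidef.sqrt` was defined
in the older Mathlib (that definition has since been removed). -/
noncomputable def psdSqrt {A : Matrix n n ℂ} (hA : A.PosSemidef) : Matrix n n ℂ :=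
  hA.1.eigenvectorUnitary.1 * diagonal ((↑) ∘ (Real.sqrt ∘ hA.1.eigenvalues)) *
    (star hA.1.eigenvectorUnitary : Matrix n n ℂ)

/-- Trace distance `D(ρ,σ) = (1/2) tr |ρ - σ|`, where `|A| = sqrt (Aᴴ A)`. -/
noncomputable def traceDist (ρ σ : Matrix n n ℂ) : ℝ :=
  (1 / 2 : ℝ) * ((psdSqrt (Matrix.posSemidef_conjTranspose_mul_self (ρ - σ))).trace).re

/-- A density matrix: positive semidefinite with trace one. -/
def IsDensity (ρ : Matrix n n ℂ) : Prop := ρ.PosSemidef ∧ ρ.trace = 1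

/-- The largest eigenvalue of a (Hermitian) matrix. -/
noncomputable def lamMax (M : Matrix n n ℂ) : ℝ :=
  if h : M.IsHermitian then ⨆ i, h.eigenvalues i else 0

/-- The smallest eigenvalue of a (Hermitian) matrix. -/
noncomputable def lamMin (M : Matrix n n ℂ) : ℝ :=
  if h : M.IsHermitian then ⨅ i, h.eigenvalues i else 0

/-- Application of a quantum channel given by Kraus matrices. -/
noncomputable def applyChan {ι : Type*} [Fintype ι] (E : ι → Matrix n n ℂ)
    (ρ : Matrix n n ℂ) : Matrix n n ℂ := ∑ j, E j * ρ * (E j)ᴴ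

/-- The dual of a quantum channel given by Kraus matrices. -/
noncomputable def dualChan {ι : Type*} [Fintype ι] (E : ι → Matrix n n ℂ)
    (M : Matrix n n ℂ) : Matrix n n ℂ := ∑ j, (E j)ᴴ * M * E j

/-- `(ε,δ)`-differential privacy within `η` of the quantum algorithm `(E, M)`. -/
def IsDP {ι : Type*} [Fintype ι] {O : Type*} [Fintype O]
    (E : ι → Matrix n n ℂ) (M : O → Matrix n n ℂ) (ε δ η : ℝ) : Prop :=
  ∀ ρ σ : Matrix n n ℂ, IsDensity ρ → IsDensity σ → traceDist ρ σ ≤ η →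
    ∀ S : Finset O,
      (∑ k ∈ S, (M k * applyChan E ρ).trace).re ≤
        Real.exp ε * (∑ k ∈ S, (M k * applyChan E σ).trace).re + δ

/-- Rank-one projection `|ψ⟩⟨ψ|`. -/
noncomputable def proj (ψ : n → ℂ) : Matrix n n ℂ := vecMulVec ψ (star ψ)

end QDP

section Helpers
open QDP
set_option linter.unusedSectionVars false

variable {n : Type*} [Fintype n] [DecidableEq n]

lemma QDP.proj_isHermitian (ψ : n → ℂ) : (proj ψ).IsHermitian := by
  ext i j
  simp [proj, Matrix.conjTranspose_apply, vecMulVec_apply, mul_comm]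

lemma QDP.proj_posSemidef (ψ : n → ℂ) : (proj ψ).PosSemidef := by
  refine posSemidef_iff_dotProduct_mulVec.mpr ⟨proj_isHermitian ψ, fun x => ?_⟩
  have h : (proj ψ) *ᵥ x = (star ψ ⬝ᵥ x) • ψ := by
    ext i
    simp [proj, mulVec, vecMulVec_apply, dotProduct, Finset.mul_sum, mul_comm, mul_assoc,
      mul_left_comm]
  rw [h, dotProduct_smul]
  have h2 : star x ⬝ᵥ ψ = star (star ψ ⬝ᵥ x) := by
    simp [dotProduct, mul_comm]
  rw [h2, smul_eq_mul]
  exact mul_star_self_nonneg _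

lemma QDP.trace_proj (ψ : n → ℂ) : (proj ψ).trace = star ψ ⬝ᵥ ψ := by
  simp [proj, Matrix.trace, Matrix.diag, vecMulVec_apply, dotProduct, mul_comm]

lemma QDP.trace_mul_proj (A : Matrix n n ℂ) (ψ : n → ℂ) :
    (A * proj ψ).trace = star ψ ⬝ᵥ (A *ᵥ ψ) := by
  simp only [Matrix.trace, Matrix.diag, Matrix.mul_apply, proj, vecMulVec_apply, dotProduct,
    mulVec, Finset.mul_sum]
  refine Finset.sum_congr rfl fun i _ => Finset.sum_congr rfl fun j _ => by ring

lemma QDP.proj_mul_proj (u v : n → ℂ) :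
    proj u * proj v = (star u ⬝ᵥ v) • vecMulVec u (star v) := by
  ext i k
  simp only [Matrix.mul_apply, proj, vecMulVec_apply, Matrix.smul_apply, dotProduct, smul_eq_mul,
    Finset.sum_mul, Finset.mul_sum]
  refine Finset.sum_congr rfl fun j _ => by ring

lemma QDP.posSemidef_real_smul {A : Matrix n n ℂ} (hA : A.PosSemidef) {c : ℝ} (hc : 0 ≤ c) :
    ((c : ℂ) • A).PosSemidef := by
  refine posSemidef_iff_dotProduct_mulVec.mpr ⟨?_, fun x => ?_⟩
  · rw [Matrix.IsHermitian, conjTranspose_smul, hA.1]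
    congr 1
    simp
  · rw [smul_mulVec, dotProduct_smul, smul_eq_mul]
    exact mul_nonneg (by exact_mod_cast hc) ((posSemidef_iff_dotProduct_mulVec.mp hA).2 x)

lemma QDP.posSemidef_sum {ι' : Type*} (s : Finset ι') (f : ι' → Matrix n n ℂ)
    (h : ∀ i ∈ s, (f i).PosSemidef) : (∑ i ∈ s, f i).PosSemidef :=
  Finset.sum_induction f _ (fun _ _ ha hb => ha.add hb) Matrix.PosSemidef.zero h

open scoped MatrixOrder in
lemma QDP.eq_psdSqrt_of_sq_eq {A C : Matrix n n ℂ} (hA : A.PosSemidef) (hC : C.PosSemidef)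
    (h : C ^ 2 = A) : C = psdSqrt hA := by
  have e : psdSqrt hA = CFC.sqrt A := by
    rw [CFC.sqrt_eq_cfc, cfc_nnreal_eq_real _ A (nonneg_iff_posSemidef.mpr hA), hA.1.cfc_eq]
    simp only [psdSqrt, IsHermitian.cfc, Unitary.conjStarAlgAut_apply]
    congr 3
    funext i
    simp [max_eq_left (hA.eigenvalues_nonneg i)]
  rw [e, ← h, CFC.sqrt_sq C (nonneg_iff_posSemidef.mpr hC)]

end Helpers

open QDP in
/-- If some `M_S` has minimum eigenvalue `0` and positive maximum eigenvalue (infinite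
condition number), then the algorithm is not `ε`-differentially private for any `ε ≥ 0`. -/
theorem not_epsDP_of_infinite_condition_number {d : ℕ} (hd : 1 ≤ d)
    {ι O : Type} [Fintype ι] [Fintype O]
    (E : ι → Matrix (Fin d) (Fin d) ℂ) (hE : ∑ j, (E j)ᴴ * E j = 1)
    (M : O → Matrix (Fin d) (Fin d) ℂ) (hMpos : ∀ k, (M k).PosSemidef)
    (hMsum : ∑ k, M k = 1)
    (η : ℝ) (hη0 : 0 < η) (hη1 : η ≤ 1)
    (S : Finset O)
    (hmin : lamMin (∑ k ∈ S, dualChan E (M k)) = 0)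
    (hmax : 0 < lamMax (∑ k ∈ S, dualChan E (M k))) :
    ∀ ε : ℝ, 0 ≤ ε → ¬ IsDP E M ε 0 η := by
  intro ε hε hDP
  haveI : Nonempty (Fin d) := Fin.pos_iff_nonempty.mp hd
  set A : Matrix (Fin d) (Fin d) ℂ := ∑ k ∈ S, dualChan E (M k) with hAdef
  have hApsd : A.PosSemidef := by
    refine posSemidef_sum _ _ fun k _ => posSemidef_sum _ _ fun j _ => ?_
    exact (hMpos k).conjTranspose_mul_mul_same (E j)
  have hAH : A.IsHermitian := hApsd.1
  -- eigenvalue extraction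
  obtain ⟨i0, hi0⟩ := Finite.exists_min hAH.eigenvalues
  obtain ⟨j0, hj0⟩ := Finite.exists_max hAH.eigenvalues
  have heig0 : hAH.eigenvalues i0 = 0 := by
    have h1 : (⨅ i, hAH.eigenvalues i) = hAH.eigenvalues i0 :=
      le_antisymm (ciInf_le (Finite.bddBelow_range _) i0) (le_ciInf hi0)
    rw [lamMin, dif_pos hAH, h1] at hmin
    exact hmin
  have heigpos : 0 < hAH.eigenvalues j0 := by
    have h1 : (⨆ i, hAH.eigenvalues i) = hAH.eigenvalues j0 :=
      le_antisymm (ciSup_le hj0) (le_ciSup (Finite.bddAbove_range _) j0)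
    rw [lamMax, dif_pos hAH, h1] at hmax
    exact hmax
  have hne : i0 ≠ j0 := by intro h; rw [h] at heig0; linarith
  set u : Fin d → ℂ := ⇑(hAH.eigenvectorBasis i0) with hu
  set v : Fin d → ℂ := ⇑(hAH.eigenvectorBasis j0) with hv
  have horth := hAH.eigenvectorBasis.orthonormal
  have hdp : ∀ i j : Fin d, star (⇑(hAH.eigenvectorBasis i)) ⬝ᵥ ⇑(hAH.eigenvectorBasis j)
      = if i = j then 1 else 0 := by
    intro i j
    have := orthonormal_iff_ite.mp horth i j
    rw [show (star (⇑(hAH.eigenvectorBasis i)) ⬝ᵥ ⇑(hAH.eigenvectorBasis j)) =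
      inner (𝕜 := ℂ) (hAH.eigenvectorBasis i) (hAH.eigenvectorBasis j) by
        rw [EuclideanSpace.inner_eq_star_dotProduct, dotProduct_comm], this]
  have huu : star u ⬝ᵥ u = 1 := by rw [hu, hdp i0 i0, if_pos rfl]
  have hvv : star v ⬝ᵥ v = 1 := by rw [hv, hdp j0 j0, if_pos rfl]
  have huv : star u ⬝ᵥ v = 0 := by rw [hu, hv, hdp i0 j0, if_neg hne]
  have hvu : star v ⬝ᵥ u = 0 := by rw [hu, hv, hdp j0 i0, if_neg (Ne.symm hne)]
  have hmvu : A *ᵥ u = ((hAH.eigenvalues i0 : ℝ) : ℂ) • u := by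
    rw [hu]
    rw [hAH.mulVec_eigenvectorBasis i0]
    ext i
    simp [Complex.real_smul]
  have hmvv : A *ᵥ v = ((hAH.eigenvalues j0 : ℝ) : ℂ) • v := by
    rw [hv]
    rw [hAH.mulVec_eigenvectorBasis j0]
    ext i
    simp [Complex.real_smul]
  -- the two states
  set ρ : Matrix (Fin d) (Fin d) ℂ := ((1 - η : ℝ) : ℂ) • proj u + ((η : ℝ) : ℂ) • proj v
    with hρdef
  set σ : Matrix (Fin d) (Fin d) ℂ := proj u with hσdef
  have hρD : IsDensity ρ := by
    constructor
    · exact (posSemidef_real_smul (proj_posSemidef u) (by linarith)).add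
        (posSemidef_real_smul (proj_posSemidef v) hη0.le)
    · rw [hρdef, trace_add, trace_smul, trace_smul, trace_proj, trace_proj, huu, hvv]
      simp
  have hσD : IsDensity σ := by
    refine ⟨proj_posSemidef u, ?_⟩
    rw [hσdef, trace_proj, huu]
  -- trace distance computation
  have hdiff : ρ - σ = (η : ℂ) • (proj v - proj u) := by
    rw [hρdef, hσdef, show ((1 - η : ℝ) : ℂ) = 1 - (η : ℂ) by push_cast; ring]
    module
  have hBH : (proj v - proj u)ᴴ = proj v - proj u := by
    rw [conjTranspose_sub, proj_isHermitian, proj_isHermitian]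
  have hBB : (proj v - proj u) * (proj v - proj u) = proj u + proj v := by
    rw [sub_mul, mul_sub, mul_sub, proj_mul_proj, proj_mul_proj, proj_mul_proj, proj_mul_proj,
      huu, hvv, huv, hvu]
    simp only [one_smul, zero_smul, sub_zero, zero_sub, sub_neg_eq_add]
    rw [show vecMulVec v (star v) = proj v from rfl, show vecMulVec u (star u) = proj u from rfl]
    abel
  have hPP : (proj u + proj v) * (proj u + proj v) = proj u + proj v := by
    rw [add_mul, mul_add, mul_add, proj_mul_proj, proj_mul_proj, proj_mul_proj, proj_mul_proj,
      huu, hvv, huv, hvu]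
    simp only [one_smul, zero_smul, add_zero, zero_add]
    rw [show vecMulVec v (star v) = proj v from rfl, show vecMulVec u (star u) = proj u from rfl]
  set C : Matrix (Fin d) (Fin d) ℂ := (η : ℂ) • (proj u + proj v) with hCdef
  have hCpsd : C.PosSemidef :=
    posSemidef_real_smul ((proj_posSemidef u).add (proj_posSemidef v)) hη0.le
  have hC2 : C ^ 2 = (ρ - σ)ᴴ * (ρ - σ) := by
    rw [hdiff, conjTranspose_smul, hBH, show star (η : ℂ) = (η : ℂ) by
      simp [Complex.star_def, Complex.conj_ofReal]]
    rw [smul_mul_assoc, mul_smul_comm, hBB, hCdef, sq, smul_mul_assoc, mul_smul_comm, hPP,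
      smul_smul]
  have hsq : C = psdSqrt (Matrix.posSemidef_conjTranspose_mul_self (ρ - σ)) :=
    eq_psdSqrt_of_sq_eq _ hCpsd hC2
  have htD : traceDist ρ σ = η := by
    rw [traceDist, ← hsq, hCdef, trace_smul, trace_add, trace_proj, trace_proj, huu, hvv]
    simp
    ring
  -- probability computation
  have key : ∀ τ : Matrix (Fin d) (Fin d) ℂ,
      ∑ k ∈ S, (M k * applyChan E τ).trace = (A * τ).trace := by
    intro τ
    rw [hAdef, Finset.sum_mul, trace_sum]
    refine Finset.sum_congr rfl fun k _ => ?_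
    rw [applyChan, Finset.mul_sum, trace_sum, dualChan, Finset.sum_mul, trace_sum]
    refine Finset.sum_congr rfl fun j _ => ?_
    rw [show M k * (E j * τ * (E j)ᴴ) = (M k * (E j * τ)) * (E j)ᴴ by noncomm_ring,
      Matrix.trace_mul_comm,
      show (E j)ᴴ * (M k * (E j * τ)) = ((E j)ᴴ * M k * E j) * τ by noncomm_ring]
  have hAu : (A * proj u).trace = 0 := by
    rw [trace_mul_proj, hmvu, dotProduct_smul, huu, heig0]
    simp
  have hAv : (A * proj v).trace = ((hAH.eigenvalues j0 : ℝ) : ℂ) := by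
    rw [trace_mul_proj, hmvv, dotProduct_smul, hvv]
    simp
  have hρval : (∑ k ∈ S, (M k * applyChan E ρ).trace).re = η * hAH.eigenvalues j0 := by
    rw [key ρ, hρdef, mul_add, mul_smul_comm, mul_smul_comm, trace_add, trace_smul, trace_smul,
      hAu, hAv]
    push_cast
    simp
  have hσval : (∑ k ∈ S, (M k * applyChan E σ).trace).re = 0 := by
    rw [key σ, hσdef, hAu]
    simp
  have h := hDP ρ σ hρD hσD (le_of_eq htD) S
  rw [hρval, hσval] at h
  have : (0:ℝ) < η * hAH.eigenvalues j0 := mul_pos hη0 heigpos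
  simp at h
  linarith
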